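/- Let q be a prime power and A, B nonempty subsets of the finite field F_q with |A||B| > q. Then there exists ξ ∈ F_q \ {0} such that both |A + ξ·B| > q/2 and |A - ξ·B| > q/2. -/

import Mathlib

open Pointwise Finset

lemma fiber_sq {α β : Type*} [DecidableEq α] [DecidableEq β] (s : Finset α) (f : α → β) :
    ((s ×ˢ s).filter fun p => f p.1 = f p.2).card
      = ∑ y ∈ s.image f, ((s.filter fun a => f a = y).card) ^ 2 := by
  rw [card_eq_sum_card_fiberwise (f := fun p => f p.1) (t := s.image f)
    (fun p hp => mem_image_of_mem f (mem_product.1 (mem_filter.1 hp).1).1)]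
  refine sum_congr rfl fun y hy => ?_
  rw [sq, ← card_product]
  congr 1
  ext p
  simp only [mem_filter, mem_product]
  constructor
  · rintro ⟨⟨⟨h1, h2⟩, he⟩, hy⟩
    exact ⟨⟨h1, hy⟩, h2, he ▸ hy⟩
  · rintro ⟨⟨h1, hy1⟩, h2, hy2⟩
    exact ⟨⟨⟨h1, h2⟩, hy1.trans hy2.symm⟩, hy1⟩

lemma cs_lemma {α β : Type*} [DecidableEq α] [DecidableEq β] (s : Finset α) (f : α → β) :
    s.card ^ 2 ≤ (s.image f).card * ((s ×ˢ s).filter fun p => f p.1 = f p.2).card := by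
  rw [fiber_sq]
  have h1 : s.card = ∑ y ∈ s.image f, (s.filter fun a => f a = y).card :=
    card_eq_sum_card_fiberwise (fun x hx => mem_image_of_mem f hx)
  have h2 := Finset.sum_mul_sq_le_sq_mul_sq (R := ℕ) (s.image f)
    (fun y => (s.filter fun a => f a = y).card) 1
  simp only [Pi.one_apply, mul_one, one_pow, sum_const, smul_eq_mul] at h2
  rw [h1]
  calc (∑ y ∈ s.image f, (s.filter fun a => f a = y).card) ^ 2
      ≤ (∑ y ∈ s.image f, ((s.filter fun a => f a = y).card)^2) * (s.image f).card := h2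
    _ = _ := mul_comm _ _

lemma arith_contra (c x y : ℤ) (hc : 1 ≤ c) (hx : 1 ≤ x) (hy : 1 ≤ y)
    (hm : c + 2 ≤ x * y) (hxy : 3 ≤ x + y)
    (hle : c * (2 * (x * y) ^ 2) ≤ (c + 1) * (c * (x * y) + (x * x - x) * (y * y - y))) :
    False := by
  nlinarith [mul_nonneg (mul_nonneg (sub_nonneg.2 hc) (sub_nonneg.2 hm)) (by positivity : (0:ℤ) ≤ x*y),
    mul_nonneg (mul_nonneg (by linarith : (0:ℤ) ≤ c + 1) (by linarith : (0:ℤ) ≤ x + y - 3)) (by positivity : (0:ℤ) ≤ x*y),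
    mul_pos (lt_of_lt_of_le (by linarith) hm) (lt_of_lt_of_le (by linarith) hm)]

theorem stmt_2 {F : Type*} [Field F] [Fintype F]
    (A B : Set F) (hA : A.Nonempty) (hB : B.Nonempty)
    (h : A.ncard * B.ncard > Fintype.card F) :
    ∃ ξ : F, ξ ≠ 0 ∧
      ((A + ξ • B).ncard : ℝ) > (Fintype.card F : ℝ) / 2 ∧
      ((A - ξ • B).ncard : ℝ) > (Fintype.card F : ℝ) / 2 := by
  classical
  by_contra hcon
  push_neg at hcon
  set q := Fintype.card F with hqdef
  have hq2 : 2 ≤ q := Fintype.one_lt_card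
  set A' : Finset F := A.toFinite.toFinset with hA'
  set B' : Finset F := B.toFinite.toFinset with hB'
  have hAmem : ∀ a, a ∈ A' ↔ a ∈ A := fun a => Set.Finite.mem_toFinset _
  have hBmem : ∀ b, b ∈ B' ↔ b ∈ B := fun b => Set.Finite.mem_toFinset _
  have hAcard : A.ncard = A'.card := Set.ncard_eq_toFinset_card _ _
  have hBcard : B.ncard = B'.card := Set.ncard_eq_toFinset_card _ _
  set P : Finset (F × F) := A' ×ˢ B' with hP
  set m : ℕ := P.card with hm
  have hmxy : m = A'.card * B'.card := card_product _ _
  -- bridge between set ncard and finset image card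
  have hbridge : ∀ ξ : F, (A + ξ • B).ncard = (P.image fun p => p.1 + ξ * p.2).card := by
    intro ξ
    have : A + ξ • B = ↑(P.image fun p => p.1 + ξ * p.2) := by
      ext z
      simp only [coe_image, Set.mem_image, mem_coe, hP, mem_product, Set.mem_add,
        Set.mem_smul_set, smul_eq_mul, Prod.exists]
      constructor
      · rintro ⟨a, ha, -, ⟨b, hb, rfl⟩, rfl⟩
        exact ⟨a, b, ⟨(hAmem a).2 ha, (hBmem b).2 hb⟩, rfl⟩
      · rintro ⟨a, b, ⟨ha, hb⟩, rfl⟩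
        exact ⟨a, (hAmem a).1 ha, ξ * b, ⟨b, (hBmem b).1 hb, rfl⟩, rfl⟩
    rw [this, Set.ncard_coe_finset]
  have hbridge' : ∀ ξ : F, (A - ξ • B).ncard = (P.image fun p => p.1 - ξ * p.2).card := by
    intro ξ
    have : A - ξ • B = ↑(P.image fun p => p.1 - ξ * p.2) := by
      ext z
      simp only [coe_image, Set.mem_image, mem_coe, hP, mem_product, Set.mem_sub,
        Set.mem_smul_set, smul_eq_mul, Prod.exists]
      constructor
      · rintro ⟨a, ha, -, ⟨b, hb, rfl⟩, rfl⟩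
        exact ⟨a, b, ⟨(hAmem a).2 ha, (hBmem b).2 hb⟩, rfl⟩
      · rintro ⟨a, b, ⟨ha, hb⟩, rfl⟩
        exact ⟨a, (hAmem a).1 ha, ξ * b, ⟨b, (hBmem b).1 hb, rfl⟩, rfl⟩
    rw [this, Set.ncard_coe_finset]
  -- energies
  set E : F → ℕ := fun ξ =>
    ((P ×ˢ P).filter fun p => p.1.1 + ξ * p.1.2 = p.2.1 + ξ * p.2.2).card with hE
  set O : F → ℕ := fun ξ =>
    ((P ×ˢ P).filter fun p => p.1 ≠ p.2 ∧ p.1.1 + ξ * p.1.2 = p.2.1 + ξ * p.2.2).card with hO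
  -- difference energy ≤ sum energy (swap b's)
  have hdiffE : ∀ ξ : F,
      ((P ×ˢ P).filter fun p => p.1.1 - ξ * p.1.2 = p.2.1 - ξ * p.2.2).card ≤ E ξ := by
    intro ξ
    apply card_le_card_of_injOn (fun p => ((p.1.1, p.2.2), (p.2.1, p.1.2)))
    · rintro ⟨⟨a, b⟩, ⟨a', b'⟩⟩ hp
      simp only [mem_coe, mem_filter, mem_product, hP] at hp ⊢
      obtain ⟨⟨⟨ha, hb⟩, ha', hb'⟩, heq⟩ := hp
      refine ⟨⟨⟨ha, hb'⟩, ha', hb⟩, ?_⟩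
      linear_combination heq
    · rintro ⟨⟨a, b⟩, ⟨a', b'⟩⟩ - ⟨⟨c, d⟩, ⟨c', d'⟩⟩ - hpq
      simp only [Prod.mk.injEq] at hpq ⊢
      tauto
  -- E ξ ≤ m + O ξ
  have hEO : ∀ ξ : F, E ξ ≤ m + O ξ := by
    intro ξ
    have hsub : ((P ×ˢ P).filter fun p => p.1.1 + ξ * p.1.2 = p.2.1 + ξ * p.2.2)
        ⊆ ((P ×ˢ P).filter fun p => p.1 = p.2)
          ∪ ((P ×ˢ P).filter fun p => p.1 ≠ p.2 ∧ p.1.1 + ξ * p.1.2 = p.2.1 + ξ * p.2.2) := by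
      intro p hp
      simp only [mem_filter, mem_union] at hp ⊢
      by_cases hd : p.1 = p.2
      · exact Or.inl ⟨hp.1, hd⟩
      · exact Or.inr ⟨hp.1, hd, hp.2⟩
    have hdiag : ((P ×ˢ P).filter fun p => p.1 = p.2).card = m := by
      rw [hm]
      apply card_nbij' (fun p => p.1) (fun a => (a, a))
      · exact fun p hp => (mem_product.1 (mem_filter.1 hp).1).1
      · exact fun a ha => mem_filter.2 ⟨mem_product.2 ⟨ha, ha⟩, rfl⟩
      · rintro ⟨p₁, p₂⟩ hp
        have h12 : p₁ = p₂ := (mem_filter.1 hp).2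
        simp [h12]
      · intro a ha; rfl
    calc E ξ ≤ _ := card_le_card hsub
      _ ≤ _ := card_union_le _ _
      _ = m + O ξ := by rw [hdiag]
  -- per-ξ inequality for bad ξ
  have hkey : ∀ ξ ∈ (univ : Finset F).erase 0, 2 * m ^ 2 ≤ q * (m + O ξ) := by
    intro ξ hξ
    have hξ0 : ξ ≠ 0 := (mem_erase.1 hξ).1
    have hbad := hcon ξ hξ0
    have hsmall : 2 * (P.image fun p => p.1 + ξ * p.2).card ≤ q
        ∨ 2 * (P.image fun p => p.1 - ξ * p.2).card ≤ q := by
      by_cases h1 : ((A + ξ • B).ncard : ℝ) > (q : ℝ) / 2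
      · right
        have h2 := hbad h1
        rw [hbridge'] at h2
        have h3 : ((2 : ℕ) * (P.image fun p => p.1 - ξ * p.2).card : ℝ) ≤ (q : ℝ) := by
          push_cast
          linarith
        exact_mod_cast h3
      · left
        rw [not_lt, hbridge] at h1
        have h3 : ((2 : ℕ) * (P.image fun p => p.1 + ξ * p.2).card : ℝ) ≤ (q : ℝ) := by
          push_cast
          linarith
        exact_mod_cast h3
    rcases hsmall with hs | hs
    · have hcs := cs_lemma P (fun p => p.1 + ξ * p.2)
      calc 2 * m ^ 2 ≤ 2 * ((P.image fun p => p.1 + ξ * p.2).card * E ξ) :=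
            Nat.mul_le_mul_left _ hcs
        _ = (2 * (P.image fun p => p.1 + ξ * p.2).card) * E ξ := by ring
        _ ≤ q * E ξ := Nat.mul_le_mul_right _ hs
        _ ≤ q * (m + O ξ) := Nat.mul_le_mul_left _ (hEO ξ)
    · have hcs := cs_lemma P (fun p => p.1 - ξ * p.2)
      have hcs2 : m ^ 2 ≤ (P.image fun p => p.1 - ξ * p.2).card * E ξ :=
        hcs.trans (Nat.mul_le_mul_left _ (hdiffE ξ))
      calc 2 * m ^ 2 ≤ 2 * ((P.image fun p => p.1 - ξ * p.2).card * E ξ) :=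
            Nat.mul_le_mul_left _ hcs2
        _ = (2 * (P.image fun p => p.1 - ξ * p.2).card) * E ξ := by ring
        _ ≤ q * E ξ := Nat.mul_le_mul_right _ hs
        _ ≤ q * (m + O ξ) := Nat.mul_le_mul_left _ (hEO ξ)
  -- double counting bound on ∑ O ξ
  have hOsum : ∑ ξ ∈ (univ : Finset F).erase 0, O ξ
      ≤ A'.offDiag.card * B'.offDiag.card := by
    have step1 : ∑ ξ ∈ (univ : Finset F).erase 0, O ξ
        = ∑ p ∈ P ×ˢ P, ∑ ξ ∈ (univ : Finset F).erase 0,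
            (if p.1 ≠ p.2 ∧ p.1.1 + ξ * p.1.2 = p.2.1 + ξ * p.2.2 then 1 else 0) := by
      rw [Finset.sum_comm]
      exact sum_congr rfl fun ξ _ => card_filter _ _
    have step2 : ∀ p ∈ P ×ˢ P, (∑ ξ ∈ (univ : Finset F).erase 0,
        (if p.1 ≠ p.2 ∧ p.1.1 + ξ * p.1.2 = p.2.1 + ξ * p.2.2 then 1 else 0))
        ≤ (if p.1.1 ≠ p.2.1 ∧ p.1.2 ≠ p.2.2 then 1 else 0) := by
      rintro ⟨⟨a, b⟩, ⟨a', b'⟩⟩ -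
      rw [← card_filter]
      dsimp only
      by_cases hd : a ≠ a' ∧ b ≠ b'
      · rw [if_pos hd]
        apply card_le_one.2
        rintro ξ hξ ζ hζ
        simp only [mem_filter, mem_erase, Prod.mk.injEq, ne_eq] at hξ hζ
        obtain ⟨⟨hξ0, -⟩, -, hξe⟩ := hξ
        obtain ⟨⟨hζ0, -⟩, -, hζe⟩ := hζ
        have hbb : b - b' ≠ 0 := sub_ne_zero.2 hd.2
        have : ξ * (b - b') = ζ * (b - b') := by linear_combination hξe - hζe
        exact mul_right_cancel₀ hbb this
      · rw [if_neg hd]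
        refine (card_eq_zero.2 ?_).le
        rw [eq_empty_iff_forall_notMem]
        intro ξ hξ
        simp only [mem_filter, mem_erase, Prod.mk.injEq, ne_eq, not_and, not_not] at hξ hd
        obtain ⟨⟨hξ0, -⟩, hne, heq⟩ := hξ
        by_cases hbb : b = b'
        · subst hbb
          have : a = a' := by linear_combination heq
          exact hne this rfl
        · have haa : a = a' := by
            by_contra haa
            exact hbb (hd haa)
          subst haa
          have : ξ * (b - b') = 0 := by linear_combination heq
          rcases mul_eq_zero.1 this with h0 | h0
          · exact hξ0 h0
          · exact hbb (sub_eq_zero.1 h0)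
    have step3 : ∑ p ∈ P ×ˢ P, (if p.1.1 ≠ p.2.1 ∧ p.1.2 ≠ p.2.2 then (1:ℕ) else 0)
        ≤ A'.offDiag.card * B'.offDiag.card := by
      rw [← card_filter, ← card_product]
      apply card_le_card_of_injOn (fun p => ((p.1.1, p.2.1), (p.1.2, p.2.2)))
      · rintro ⟨⟨a, b⟩, ⟨a', b'⟩⟩ hp
        simp only [mem_coe, mem_filter, mem_product, hP, mem_offDiag, ne_eq] at hp ⊢
        obtain ⟨⟨⟨ha, hb⟩, ha', hb'⟩, hd1, hd2⟩ := hp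
        exact ⟨⟨ha, ha', hd1⟩, hb, hb', hd2⟩
      · rintro ⟨⟨a, b⟩, ⟨a', b'⟩⟩ - ⟨⟨c, d⟩, ⟨c', d'⟩⟩ - hpq
        simp only [Prod.mk.injEq] at hpq ⊢
        tauto
    calc _ = _ := step1
      _ ≤ ∑ p ∈ P ×ˢ P, (if p.1.1 ≠ p.2.1 ∧ p.1.2 ≠ p.2.2 then (1:ℕ) else 0) :=
          sum_le_sum step2
      _ ≤ _ := step3
  -- sum up
  set c : ℕ := ((univ : Finset F).erase 0).card with hc
  have hcq : c + 1 = q := by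
    rw [hc, hqdef]
    exact card_erase_add_one (mem_univ 0)
  have hsummed : c * (2 * m ^ 2) ≤ q * (c * m + A'.offDiag.card * B'.offDiag.card) := by
    have := sum_le_sum hkey
    rw [sum_const, smul_eq_mul] at this
    calc c * (2 * m ^ 2) ≤ ∑ ξ ∈ (univ : Finset F).erase 0, q * (m + O ξ) := this
      _ = q * (c * m + ∑ ξ ∈ (univ : Finset F).erase 0, O ξ) := by
          rw [← mul_sum, sum_add_distrib, sum_const, smul_eq_mul]
      _ ≤ q * (c * m + A'.offDiag.card * B'.offDiag.card) :=
          Nat.mul_le_mul_left _ (Nat.add_le_add_left hOsum _)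
  -- final arithmetic contradiction
  have hx1 : 1 ≤ A'.card := card_pos.2 ⟨hA.choose, (hAmem _).2 hA.choose_spec⟩
  have hy1 : 1 ≤ B'.card := card_pos.2 ⟨hB.choose, (hBmem _).2 hB.choose_spec⟩
  have hc1 : 1 ≤ c := by omega
  have hmq : q + 1 ≤ A'.card * B'.card := by
    rw [hAcard, hBcard] at h; omega
  set x := A'.card
  set y := B'.card
  have hxy3 : 3 ≤ x + y := by
    rcases Nat.lt_or_ge x 2 with hx2 | hx2
    · have hx : x = 1 := by omega
      rw [hx, one_mul] at hmq; omega
    · omega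
  have hDA : (A'.offDiag.card : ℤ) = (x : ℤ) * x - x := by
    rw [offDiag_card]
    have : x ≤ x * x := Nat.le_mul_of_pos_left x (by omega)
    rw [Nat.cast_sub this]; push_cast
    ring
  have hDB : (B'.offDiag.card : ℤ) = (y : ℤ) * y - y := by
    rw [offDiag_card]
    have : y ≤ y * y := Nat.le_mul_of_pos_left y (by omega)
    rw [Nat.cast_sub this]; push_cast
    ring
  apply arith_contra (c : ℤ) (x : ℤ) (y : ℤ)
    (by exact_mod_cast hc1) (by exact_mod_cast hx1) (by exact_mod_cast hy1)
  · have : (q : ℤ) = c + 1 := by exact_mod_cast hcq.symm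
    have hmq' : (q : ℤ) + 1 ≤ (x : ℤ) * y := by exact_mod_cast hmq
    linarith
  · exact_mod_cast hxy3
  · have hsummed' : (c : ℤ) * (2 * ((m : ℤ)) ^ 2)
        ≤ (q : ℤ) * ((c : ℤ) * m + (A'.offDiag.card : ℤ) * (B'.offDiag.card : ℤ)) := by
      exact_mod_cast hsummed
    have hmm : (m : ℤ) = (x : ℤ) * y := by exact_mod_cast hmxy
    have hqq : (q : ℤ) = (c : ℤ) + 1 := by exact_mod_cast hcq.symm
    rw [hmm, hqq, hDA, hDB] at hsummed'
    exact hsummed'
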